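/- Let n ≥ 2 be an integer and α ∈ (0,1) ∪ (1,∞). For every h ∈ [0, ln n] there exist t ∈ [0, 1] and p_0, p_1 ∈ 𝒫_n such that t·H(p_0) + (1−t)·H(p_1) = h and t·‖p_0‖_α + (1−t)·‖p_1‖_α = L_min^α(h). Indeed, when h < ln n one may take m = ⌊e^h⌋, p_0 = w_n(1/m), p_1 = w_n(1/(m+1)), and t = (ln(m+1) − h)/(ln(m+1) − ln m); when h = ln n one may take p_0 = p_1 = u_n. -/

import Mathlib

open Real

/-- Shannon entropy (natural log, with `0 * log 0 = 0` since `Real.log 0 = 0`). -/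
noncomputable def shannonEntropy {n : ℕ} (p : Fin n → ℝ) : ℝ :=
  -∑ i, p i * Real.log (p i)

/-- ℓ_α-norm of a vector (real power). -/
noncomputable def lNorm {n : ℕ} (α : ℝ) (p : Fin n → ℝ) : ℝ :=
  (∑ i, p i ^ α) ^ (1 / α)

/-- `p` is an `n`-ary probability vector. -/
def IsProbVec {n : ℕ} (p : Fin n → ℝ) : Prop :=
  (∀ i, 0 ≤ p i) ∧ ∑ i, p i = 1

/-- The vector `v_n(q)`: first entry `1 - (n-1)q`, the other `n-1` entries equal `q`. -/
noncomputable def vVec (n : ℕ) (q : ℝ) : Fin n → ℝ :=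
  fun i => if (i : ℕ) = 0 then 1 - ((n : ℝ) - 1) * q else q

/-- The vector `w_n(r)`: first `⌊1/r⌋` entries equal `r`, the next entry is
`1 - ⌊1/r⌋·r`, the remaining entries are `0`. -/
noncomputable def wVec (n : ℕ) (r : ℝ) : Fin n → ℝ :=
  fun i => if (i : ℕ) < ⌊1 / r⌋₊ then r
           else if (i : ℕ) = ⌊1 / r⌋₊ then 1 - (⌊1 / r⌋₊ : ℝ) * r
           else 0

/-- `L_min^α(h) = λ·m^(1/α−1) + (1−λ)·(m+1)^(1/α−1)` where `m = ⌊e^h⌋` and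
`λ = (ln(m+1) − h)/(ln(m+1) − ln m)`. -/
noncomputable def Lmin (α h : ℝ) : ℝ :=
  ((Real.log ((⌊Real.exp h⌋₊ : ℝ) + 1) - h) /
      (Real.log ((⌊Real.exp h⌋₊ : ℝ) + 1) - Real.log (⌊Real.exp h⌋₊ : ℝ))) *
    (⌊Real.exp h⌋₊ : ℝ) ^ (1 / α - 1) +
  (1 - (Real.log ((⌊Real.exp h⌋₊ : ℝ) + 1) - h) /
      (Real.log ((⌊Real.exp h⌋₊ : ℝ) + 1) - Real.log (⌊Real.exp h⌋₊ : ℝ))) *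
    ((⌊Real.exp h⌋₊ : ℝ) + 1) ^ (1 / α - 1)


lemma wVec_apply (n k : ℕ) (hk : 1 ≤ k) (i : Fin n) :
    wVec n (1/(k:ℝ)) i = if (i:ℕ) < k then 1/(k:ℝ) else 0 := by
  have hk0 : (k:ℝ) ≠ 0 := Nat.cast_ne_zero.mpr (by omega)
  unfold wVec
  rw [one_div_one_div, Nat.floor_natCast]
  by_cases hi : (i:ℕ) < k
  · simp [hi]
  · simp only [hi, if_false]
    split
    · field_simp; norm_num
    · rfl


lemma sum_if_lt (n k : ℕ) (hkn : k ≤ n) (f : ℕ → ℝ) :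
    ∑ i : Fin n, (if (i:ℕ) < k then f (i:ℕ) else 0) = ∑ i ∈ Finset.range k, f i := by
  rw [Fin.sum_univ_eq_sum_range (fun i => if i < k then f i else 0) n]
  rw [← Finset.sum_subset (Finset.range_subset_range.mpr hkn)
    (fun x _ hx => if_neg (by simpa using hx))]
  exact Finset.sum_congr rfl fun x hx => if_pos (Finset.mem_range.mp hx)

lemma wVec_prob (n k : ℕ) (hk : 1 ≤ k) (hkn : k ≤ n) : IsProbVec (wVec n (1/(k:ℝ))) := by
  have hk0 : (k:ℝ) ≠ 0 := Nat.cast_ne_zero.mpr (by omega)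
  constructor
  · intro i; rw [wVec_apply n k hk i]; split <;> positivity
  · rw [Finset.sum_congr rfl (fun i _ => wVec_apply n k hk i),
      sum_if_lt n k hkn (fun _ => 1/(k:ℝ))]
    simp [Finset.sum_const, Finset.card_range]
    field_simp

lemma wVec_entropy (n k : ℕ) (hk : 1 ≤ k) (hkn : k ≤ n) :
    shannonEntropy (wVec n (1/(k:ℝ))) = Real.log k := by
  have hk0 : (k:ℝ) ≠ 0 := Nat.cast_ne_zero.mpr (by omega)
  unfold shannonEntropy
  have h1 : ∀ i : Fin n, wVec n (1/(k:ℝ)) i * Real.log (wVec n (1/(k:ℝ)) i)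
      = if (i:ℕ) < k then (1/(k:ℝ)) * Real.log (1/(k:ℝ)) else 0 := by
    intro i; rw [wVec_apply n k hk i]; split <;> simp
  rw [Finset.sum_congr rfl (fun i _ => h1 i),
    sum_if_lt n k hkn (fun _ => (1/(k:ℝ)) * Real.log (1/(k:ℝ)))]
  simp only [Finset.sum_const, Finset.card_range, nsmul_eq_mul]
  rw [one_div, Real.log_inv]
  field_simp

lemma wVec_lnorm (n k : ℕ) (hk : 1 ≤ k) (hkn : k ≤ n) (α : ℝ) (hα : 0 < α) :
    lNorm α (wVec n (1/(k:ℝ))) = (k:ℝ) ^ (1/α - 1) := by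
  have hkpos : (0:ℝ) < k := by exact_mod_cast Nat.pos_of_ne_zero (by omega)
  unfold lNorm
  have h1 : ∀ i : Fin n, wVec n (1/(k:ℝ)) i ^ α
      = if (i:ℕ) < k then (1/(k:ℝ)) ^ α else 0 := by
    intro i; rw [wVec_apply n k hk i]; split
    · rfl
    · exact Real.zero_rpow hα.ne'
  rw [Finset.sum_congr rfl (fun i _ => h1 i), sum_if_lt n k hkn (fun _ => (1/(k:ℝ)) ^ α)]
  simp only [Finset.sum_const, Finset.card_range, nsmul_eq_mul]
  rw [one_div, Real.inv_rpow hkpos.le]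
  rw [← Real.rpow_neg hkpos.le]
  nth_rewrite 1 [← Real.rpow_one (k:ℝ)]
  rw [← Real.rpow_add hkpos, ← Real.rpow_mul hkpos.le]
  congr 1
  field_simp
  ring

lemma floor_facts (n : ℕ) (hn : 2 ≤ n) (h : ℝ) (hh : h ∈ Set.Ico 0 (Real.log n)) :
    1 ≤ ⌊Real.exp h⌋₊ ∧ ⌊Real.exp h⌋₊ + 1 ≤ n ∧
    Real.log (⌊Real.exp h⌋₊ : ℝ) ≤ h ∧ h < Real.log ((⌊Real.exp h⌋₊:ℝ)+1) := by
  have npos : (0:ℝ) < n := by positivity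
  have hexp1 : (1:ℝ) ≤ Real.exp h := Real.one_le_exp hh.1
  have hm1 : 1 ≤ ⌊Real.exp h⌋₊ := Nat.le_floor (by exact_mod_cast hexp1)
  have hexpn : Real.exp h < n := by
    have := Real.exp_lt_exp.mpr hh.2
    rwa [Real.exp_log npos] at this
  have hmn : ⌊Real.exp h⌋₊ < n := by
    have := (Nat.floor_lt (Real.exp_pos h).le).mpr hexpn
    exact_mod_cast this
  have hmle : ((⌊Real.exp h⌋₊:ℕ):ℝ) ≤ Real.exp h := Nat.floor_le (Real.exp_pos h).le
  have hlt : Real.exp h < (⌊Real.exp h⌋₊:ℝ)+1 := Nat.lt_floor_add_one _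
  have mpos : (0:ℝ) < (⌊Real.exp h⌋₊:ℝ) := by exact_mod_cast hm1
  refine ⟨hm1, by omega, ?_, ?_⟩
  · have := Real.log_le_log mpos hmle
    rwa [Real.log_exp] at this
  · have := Real.log_lt_log (Real.exp_pos h) hlt
    rwa [Real.log_exp] at this

lemma mix_eqs (n : ℕ) (hn : 2 ≤ n) (α : ℝ) (hα0 : 0 < α) (h : ℝ)
    (hh : h ∈ Set.Ico 0 (Real.log n)) :
      ((Real.log ((⌊Real.exp h⌋₊ : ℝ) + 1) - h) /
            (Real.log ((⌊Real.exp h⌋₊ : ℝ) + 1) - Real.log (⌊Real.exp h⌋₊ : ℝ))) *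
          shannonEntropy (wVec n (1 / (⌊Real.exp h⌋₊ : ℝ))) +
        (1 - (Real.log ((⌊Real.exp h⌋₊ : ℝ) + 1) - h) /
            (Real.log ((⌊Real.exp h⌋₊ : ℝ) + 1) - Real.log (⌊Real.exp h⌋₊ : ℝ))) *
          shannonEntropy (wVec n (1 / ((⌊Real.exp h⌋₊ : ℝ) + 1))) = h ∧
      ((Real.log ((⌊Real.exp h⌋₊ : ℝ) + 1) - h) /
            (Real.log ((⌊Real.exp h⌋₊ : ℝ) + 1) - Real.log (⌊Real.exp h⌋₊ : ℝ))) *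
          lNorm α (wVec n (1 / (⌊Real.exp h⌋₊ : ℝ))) +
        (1 - (Real.log ((⌊Real.exp h⌋₊ : ℝ) + 1) - h) /
            (Real.log ((⌊Real.exp h⌋₊ : ℝ) + 1) - Real.log (⌊Real.exp h⌋₊ : ℝ))) *
          lNorm α (wVec n (1 / ((⌊Real.exp h⌋₊ : ℝ) + 1))) = Lmin α h := by
  obtain ⟨hm1, hm1n, hla, hlb⟩ := floor_facts n hn h hh
  set m := ⌊Real.exp h⌋₊ with hm
  have mpos : (0:ℝ) < (m:ℝ) := by exact_mod_cast hm1
  have dpos : 0 < Real.log ((m:ℝ)+1) - Real.log (m:ℝ) :=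
    sub_pos.mpr (Real.log_lt_log mpos (lt_add_one _))
  have e1 : shannonEntropy (wVec n (1/(m:ℝ))) = Real.log (m:ℝ) :=
    wVec_entropy n m hm1 (by omega)
  have e2 : shannonEntropy (wVec n (1/((m:ℝ)+1))) = Real.log ((m:ℝ)+1) := by
    have := wVec_entropy n (m+1) (by omega) hm1n
    push_cast at this; exact this
  have l1 : lNorm α (wVec n (1/(m:ℝ))) = (m:ℝ) ^ (1/α - 1) :=
    wVec_lnorm n m hm1 (by omega) α hα0
  have l2 : lNorm α (wVec n (1/((m:ℝ)+1))) = ((m:ℝ)+1) ^ (1/α - 1) := by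
    have := wVec_lnorm n (m+1) (by omega) hm1n α hα0
    push_cast at this; exact this
  constructor
  · rw [e1, e2]
    field_simp
    ring
  · rw [l1, l2, Lmin, ← hm]

lemma uni_eqs (n : ℕ) (hn : 2 ≤ n) (α : ℝ) (hα0 : 0 < α) :
    shannonEntropy (fun _ : Fin n => 1 / (n : ℝ)) = Real.log n ∧
    lNorm α (fun _ : Fin n => 1 / (n : ℝ)) = Lmin α (Real.log n) ∧
    IsProbVec (fun _ : Fin n => 1 / (n : ℝ)) := by
  have npos : (0:ℝ) < n := by positivity
  have huni : (fun _ : Fin n => 1/(n:ℝ)) = wVec n (1/(n:ℝ)) := by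
    funext i
    rw [wVec_apply n n (by omega) i, if_pos i.isLt]
  have hfl : ⌊Real.exp (Real.log n)⌋₊ = n := by
    rw [Real.exp_log npos, Nat.floor_natCast]
  have dpos : 0 < Real.log ((n:ℝ)+1) - Real.log (n:ℝ) :=
    sub_pos.mpr (Real.log_lt_log npos (lt_add_one _))
  refine ⟨?_, ?_, ?_⟩
  · rw [huni, wVec_entropy n n (by omega) le_rfl]
  · rw [huni, wVec_lnorm n n (by omega) le_rfl α hα0, Lmin, hfl,
      div_self dpos.ne']
    ring
  · rw [huni]; exact wVec_prob n n (by omega) le_rfl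


theorem stmt11 (n : ℕ) (hn : 2 ≤ n) (α : ℝ) (hα : α ∈ Set.Ioo (0 : ℝ) 1 ∪ Set.Ioi 1) :
    (∀ h ∈ Set.Icc (0 : ℝ) (Real.log n),
      ∃ t ∈ Set.Icc (0 : ℝ) 1, ∃ p₀ p₁ : Fin n → ℝ, IsProbVec p₀ ∧ IsProbVec p₁ ∧
        t * shannonEntropy p₀ + (1 - t) * shannonEntropy p₁ = h ∧
        t * lNorm α p₀ + (1 - t) * lNorm α p₁ = Lmin α h) ∧
    (∀ h ∈ Set.Ico (0 : ℝ) (Real.log n),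
      ((Real.log ((⌊Real.exp h⌋₊ : ℝ) + 1) - h) /
            (Real.log ((⌊Real.exp h⌋₊ : ℝ) + 1) - Real.log (⌊Real.exp h⌋₊ : ℝ))) *
          shannonEntropy (wVec n (1 / (⌊Real.exp h⌋₊ : ℝ))) +
        (1 - (Real.log ((⌊Real.exp h⌋₊ : ℝ) + 1) - h) /
            (Real.log ((⌊Real.exp h⌋₊ : ℝ) + 1) - Real.log (⌊Real.exp h⌋₊ : ℝ))) *
          shannonEntropy (wVec n (1 / ((⌊Real.exp h⌋₊ : ℝ) + 1))) = h ∧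
      ((Real.log ((⌊Real.exp h⌋₊ : ℝ) + 1) - h) /
            (Real.log ((⌊Real.exp h⌋₊ : ℝ) + 1) - Real.log (⌊Real.exp h⌋₊ : ℝ))) *
          lNorm α (wVec n (1 / (⌊Real.exp h⌋₊ : ℝ))) +
        (1 - (Real.log ((⌊Real.exp h⌋₊ : ℝ) + 1) - h) /
            (Real.log ((⌊Real.exp h⌋₊ : ℝ) + 1) - Real.log (⌊Real.exp h⌋₊ : ℝ))) *
          lNorm α (wVec n (1 / ((⌊Real.exp h⌋₊ : ℝ) + 1))) = Lmin α h) ∧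
    (shannonEntropy (fun _ : Fin n => 1 / (n : ℝ)) = Real.log n ∧
      lNorm α (fun _ : Fin n => 1 / (n : ℝ)) = Lmin α (Real.log n)) := by
  have hα0 : 0 < α := by
    rcases hα with h1 | h1
    · exact h1.1
    · exact lt_trans one_pos h1
  obtain ⟨uH, uL, uP⟩ := uni_eqs n hn α hα0
  refine ⟨?_, fun h hh => mix_eqs n hn α hα0 h hh, uH, uL⟩
  intro h hh
  rcases lt_or_eq_of_le hh.2 with hlt | heq
  · obtain ⟨hm1, hm1n, hla, hlb⟩ := floor_facts n hn h ⟨hh.1, hlt⟩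
    set m := ⌊Real.exp h⌋₊ with hm
    have mpos : (0:ℝ) < (m:ℝ) := by exact_mod_cast hm1
    have dpos : 0 < Real.log ((m:ℝ)+1) - Real.log (m:ℝ) :=
      sub_pos.mpr (Real.log_lt_log mpos (lt_add_one _))
    have hP2 : IsProbVec (wVec n (1/((m:ℝ)+1))) := by
      have := wVec_prob n (m+1) (by omega) hm1n
      push_cast at this; exact this
    exact ⟨_, ⟨div_nonneg (by linarith) dpos.le,
        (div_le_one dpos).mpr (by linarith)⟩,
      wVec n (1/(m:ℝ)), wVec n (1/((m:ℝ)+1)),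
      wVec_prob n m hm1 (by omega), hP2,
      (mix_eqs n hn α hα0 h ⟨hh.1, hlt⟩).1, (mix_eqs n hn α hα0 h ⟨hh.1, hlt⟩).2⟩
  · subst heq
    exact ⟨1, ⟨zero_le_one, le_rfl⟩, _, _, uP, uP, by rw [uH]; ring, by rw [uL]; ring⟩
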